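/- Let n ∈ ℕ, let a : Fin n → ℂ satisfy ∑_j ‖a_j‖² = 1, let E : Fin n → ℝ, let τ ≥ 0, and set √ε = ‖∑_j ‖a_j‖²·exp(−i·E_j·τ)‖. Let p ∈ (0,2) and suppose φ_p(0) ≤ arccos(√ε). Then for every E_r ∈ ℝ: τ^p · ∑_j ‖a_j‖²·|E_j − E_r|^p ≥ (arccos √ε)^p. -/

import Mathlib

open Real Set

/-- `t ↦ t * cos t / sin t` is antitone on `(0, π)`, product form. -/
lemma aux_tcot {a b : ℝ} (ha : 0 < a) (hab : a ≤ b) (hb : b < Real.pi) :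
    b * Real.cos b * Real.sin a ≤ a * Real.cos a * Real.sin b := by
  have hsa : 0 < Real.sin a := Real.sin_pos_of_pos_of_lt_pi ha (lt_of_le_of_lt hab hb)
  have hsb : 0 < Real.sin b := Real.sin_pos_of_pos_of_lt_pi (ha.trans_le hab) hb
  set g : ℝ → ℝ := fun t => t * Real.cos t / Real.sin t with hg
  have hderiv : ∀ t ∈ Set.Icc a b, HasDerivAt g
      (((Real.cos t - t * Real.sin t) * Real.sin t - t * Real.cos t * Real.cos t) /
        Real.sin t ^ 2) t := by
    intro t ht
    have hst : Real.sin t ≠ 0 :=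
      (Real.sin_pos_of_pos_of_lt_pi (ha.trans_le ht.1) (lt_of_le_of_lt ht.2 hb)).ne'
    have h1 : HasDerivAt (fun t : ℝ => t * Real.cos t)
        (1 * Real.cos t + t * (-Real.sin t)) t :=
      (hasDerivAt_id t).mul (Real.hasDerivAt_cos t)
    have := h1.div (Real.hasDerivAt_sin t) hst
    exact this.congr_deriv (by ring)
  have hanti : AntitoneOn g (Set.Icc a b) := by
    apply antitoneOn_of_deriv_nonpos (convex_Icc a b)
    · exact fun t ht => (hderiv t ht).continuousAt.continuousWithinAt
    · intro t ht
      exact (hderiv t (interior_subset ht)).differentiableAt.differentiableWithinAt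
    · intro t ht
      rw [interior_Icc] at ht
      rw [(hderiv t ⟨ht.1.le, ht.2.le⟩).deriv]
      apply div_nonpos_of_nonpos_of_nonneg _ (sq_nonneg _)
      have hst : 0 ≤ Real.sin t :=
        (Real.sin_pos_of_pos_of_lt_pi (ha.trans ht.1) (ht.2.trans hb)).le
      have h1 : Real.sin t * Real.cos t ≤ t :=
        le_trans (mul_le_of_le_one_right hst (Real.cos_le_one t))
          (Real.sin_le (ha.trans ht.1).le)
      have h2 : (Real.cos t - t * Real.sin t) * Real.sin t - t * Real.cos t * Real.cos t
          = Real.sin t * Real.cos t - t := by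
        linear_combination (-t) * (Real.sin_sq_add_cos_sq t)
      linarith
  have := hanti (Set.left_mem_Icc.mpr hab) (Set.right_mem_Icc.mpr hab) hab
  rw [hg] at this
  simp only at this
  rw [div_le_div_iff₀ hsb hsa] at this
  linarith

/-- Main pointwise inequality. -/
lemma key_pointwise {p θ : ℝ} (hp2 : p < 2) (hθ0 : 0 < θ) (hθπ : θ ≤ Real.pi / 2)
    (hk : θ * Real.sin θ ≤ p * (1 - Real.cos θ)) :
    ∀ x : ℝ, 0 ≤ x →
      Real.sin θ * θ ^ p + p * θ ^ (p - 1) * Real.cos θ ≤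
        Real.sin θ * x ^ p + p * θ ^ (p - 1) * Real.cos x := by
  have hπ : (0:ℝ) < Real.pi := Real.pi_pos
  have hθπ' : θ < Real.pi := lt_of_le_of_lt hθπ (by linarith)
  have hsθ : 0 < Real.sin θ := Real.sin_pos_of_pos_of_lt_pi hθ0 hθπ'
  have hcθ : 0 ≤ Real.cos θ := Real.cos_nonneg_of_mem_Icc ⟨by linarith, hθπ⟩
  have hslt : Real.sin θ ≤ θ := Real.sin_le hθ0.le
  have hc1 : Real.cos θ < 1 := by
    nlinarith [Real.sin_sq_add_cos_sq θ, Real.cos_le_one θ]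
  -- p sin θ ≥ θ (1 + cos θ)
  have hpc : θ * (1 + Real.cos θ) ≤ p * Real.sin θ := by
    have hs2 : Real.sin θ ^ 2 = 1 - Real.cos θ ^ 2 := Real.sin_sq θ
    nlinarith [mul_le_mul_of_nonneg_right hk hsθ.le]
  have hp1 : 1 ≤ p := by nlinarith
  have hp0 : 0 < p := by linarith
  set q : ℝ := p - 1 with hqdef
  clear_value q
  have hq0 : 0 ≤ q := by simp [hqdef]; linarith
  have hq1 : q < 1 := by simp [hqdef]; linarith
  have hqs : θ * Real.cos θ ≤ q * Real.sin θ := by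
    have : q * Real.sin θ = p * Real.sin θ - Real.sin θ := by rw [hqdef]; ring
    nlinarith
  have hθq : 0 < θ ^ q := Real.rpow_pos_of_pos hθ0 q
  set C : ℝ := p * θ ^ q with hCq
  have hC0 : 0 < C := mul_pos hp0 hθq
  set F : ℝ → ℝ := fun x => Real.sin θ * x ^ p + C * Real.cos x with hFdef
  -- derivative of F
  have hF' : ∀ y : ℝ, HasDerivAt F (p * (Real.sin θ * y ^ q - θ ^ q * Real.sin y)) y := by
    intro y
    have h1 : HasDerivAt (fun x : ℝ => x ^ p) (p * y ^ (p - 1)) y :=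
      Real.hasDerivAt_rpow_const (Or.inr hp1)
    have h2 := (h1.const_mul (Real.sin θ)).add ((Real.hasDerivAt_cos y).const_mul C)
    exact h2.congr_deriv (by rw [hCq, hqdef]; ring)
  -- ρ and its monotonicity pieces
  set ρ : ℝ → ℝ := fun y => y ^ q / Real.sin y with hρdef
  have hρ' : ∀ y, 0 < y → y < Real.pi →
      HasDerivAt ρ ((q * y ^ (q - 1) * Real.sin y - y ^ q * Real.cos y) / Real.sin y ^ 2) y := by
    intro y hy hyπ
    have hsy : Real.sin y ≠ 0 := (Real.sin_pos_of_pos_of_lt_pi hy hyπ).ne'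
    have h1 : HasDerivAt (fun x : ℝ => x ^ q) (q * y ^ (q - 1)) y :=
      Real.hasDerivAt_rpow_const (Or.inl hy.ne')
    exact h1.div (Real.hasDerivAt_sin y) hsy
  have hρcont : ∀ {s : Set ℝ}, s ⊆ Set.Ioo 0 Real.pi → ContinuousOn ρ s := by
    intro s hs
    intro y hy
    exact ((hρ' y (hs hy).1 (hs hy).2).continuousAt).continuousWithinAt
  -- sign of the ρ-derivative numerator
  have hsign : ∀ y, 0 < y → y < Real.pi →
      (q * y ^ (q - 1) * Real.sin y - y ^ q * Real.cos y)
        = y ^ (q - 1) * (q * Real.sin y - y * Real.cos y) := by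
    intro y hy _
    have : y ^ q = y ^ (q - 1) * y := by
      rw [← Real.rpow_add_one hy.ne' (q - 1)]
      congr 1
      ring
    rw [this]; ring
  -- the set S and its sup
  set S : Set ℝ := {y | y ∈ Set.Icc 0 θ ∧ q * Real.sin y ≤ y * Real.cos y} with hSdef
  have hS0 : (0:ℝ) ∈ S := ⟨⟨le_rfl, hθ0.le⟩, by simp⟩
  have hSbdd : BddAbove S := ⟨θ, fun y hy => hy.1.2⟩
  set x₁ : ℝ := sSup S with hx₁def
  have hx₁0 : 0 ≤ x₁ := le_csSup hSbdd hS0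
  have hx₁θ : x₁ ≤ θ := csSup_le ⟨0, hS0⟩ fun y hy => hy.1.2
  -- sign facts
  have hpos : ∀ y, 0 < y → y < x₁ → q * Real.sin y ≤ y * Real.cos y := by
    intro y hy hyx
    obtain ⟨z, hzS, hyz⟩ := exists_lt_of_lt_csSup ⟨0, hS0⟩ hyx
    have hz0 : 0 < z := hy.trans hyz
    have hzθ : z ≤ θ := hzS.1.2
    have hsz : 0 < Real.sin z := Real.sin_pos_of_pos_of_lt_pi hz0 (lt_of_le_of_lt hzθ hθπ')
    have hsy : 0 < Real.sin y := Real.sin_pos_of_pos_of_lt_pi hy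
      (by linarith [hyx.trans_le hx₁θ])
    have h1 := aux_tcot hy hyz.le (lt_of_le_of_lt hzθ hθπ')
    have h2 := hzS.2
    -- q sin y sin z ≤ z cos z sin y ≤ y cos y sin z
    have h3 : q * Real.sin y * Real.sin z ≤ y * Real.cos y * Real.sin z := by
      calc q * Real.sin y * Real.sin z = (q * Real.sin z) * Real.sin y := by ring
      _ ≤ (z * Real.cos z) * Real.sin y := by
          exact mul_le_mul_of_nonneg_right h2 hsy.le
      _ ≤ y * Real.cos y * Real.sin z := h1
    exact le_of_mul_le_mul_right h3 hsz
  have hneg : ∀ y, x₁ < y → y ≤ θ → y * Real.cos y < q * Real.sin y := by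
    intro y hyx hyθ
    by_contra hcon
    push_neg at hcon
    have : y ∈ S := ⟨⟨hx₁0.trans hyx.le, hyθ⟩, hcon⟩
    exact absurd (le_csSup hSbdd this) (not_le.mpr hyx)
  -- monotonicity helpers for ρ
  have hM1 : ∀ y z, 0 < y → y ≤ z → z ≤ x₁ → ρ z ≤ ρ y := by
    intro y z hy hyz hzx
    have hsub : Set.Icc y z ⊆ Set.Ioo 0 Real.pi := fun t ht =>
      ⟨hy.trans_le ht.1, by linarith [ht.2.trans (hzx.trans hx₁θ)]⟩
    have : AntitoneOn ρ (Set.Icc y z) := by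
      apply antitoneOn_of_deriv_nonpos (convex_Icc y z) (hρcont hsub)
      · intro t ht
        rw [interior_Icc] at ht
        exact (hρ' t (hy.trans ht.1) (by linarith [ht.2.trans_le (hzx.trans hx₁θ)])
          ).differentiableAt.differentiableWithinAt
      · intro t ht
        rw [interior_Icc] at ht
        have ht0 : 0 < t := hy.trans ht.1
        have htπ : t < Real.pi := by linarith [ht.2.trans_le (hzx.trans hx₁θ)]
        rw [(hρ' t ht0 htπ).deriv]
        apply div_nonpos_of_nonpos_of_nonneg _ (sq_nonneg _)
        rw [hsign t ht0 htπ]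
        apply mul_nonpos_of_nonneg_of_nonpos (Real.rpow_nonneg ht0.le _)
        have := hpos t ht0 (lt_of_lt_of_le ht.2 hzx)
        linarith
    exact this (Set.left_mem_Icc.mpr hyz) (Set.right_mem_Icc.mpr hyz) hyz
  have hM2 : ∀ y, x₁ < y → y ≤ θ → ρ y ≤ ρ θ := by
    intro y hxy hyθ
    have hy0 : 0 < y := hx₁0.trans_lt hxy
    have hsub : Set.Icc y θ ⊆ Set.Ioo 0 Real.pi := fun t ht =>
      ⟨hy0.trans_le ht.1, lt_of_le_of_lt ht.2 hθπ'⟩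
    have : MonotoneOn ρ (Set.Icc y θ) := by
      apply monotoneOn_of_deriv_nonneg (convex_Icc y θ) (hρcont hsub)
      · intro t ht
        rw [interior_Icc] at ht
        exact (hρ' t (hy0.trans ht.1) (lt_trans ht.2 hθπ')).differentiableAt.differentiableWithinAt
      · intro t ht
        rw [interior_Icc] at ht
        have ht0 : 0 < t := hy0.trans ht.1
        have htπ : t < Real.pi := lt_trans ht.2 hθπ'
        rw [(hρ' t ht0 htπ).deriv]
        apply div_nonneg _ (sq_nonneg _)
        rw [hsign t ht0 htπ]
        apply mul_nonneg (Real.rpow_nonneg ht0.le _)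
        have := hneg t (hxy.trans ht.1) ht.2.le
        linarith
    exact this (Set.left_mem_Icc.mpr hyθ) (Set.right_mem_Icc.mpr hyθ) hyθ
  have hM3 : ∀ y, θ ≤ y → y < Real.pi → ρ θ ≤ ρ y := by
    intro y hθy hyπ
    have hsub : Set.Icc θ y ⊆ Set.Ioo 0 Real.pi := fun t ht =>
      ⟨hθ0.trans_le ht.1, lt_of_le_of_lt ht.2 hyπ⟩
    have : MonotoneOn ρ (Set.Icc θ y) := by
      apply monotoneOn_of_deriv_nonneg (convex_Icc θ y) (hρcont hsub)
      · intro t ht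
        rw [interior_Icc] at ht
        exact (hρ' t (hθ0.trans ht.1) (lt_trans ht.2 hyπ)).differentiableAt.differentiableWithinAt
      · intro t ht
        rw [interior_Icc] at ht
        have ht0 : 0 < t := hθ0.trans ht.1
        have htπ : t < Real.pi := lt_trans ht.2 hyπ
        rw [(hρ' t ht0 htπ).deriv]
        apply div_nonneg _ (sq_nonneg _)
        rw [hsign t ht0 htπ]
        apply mul_nonneg (Real.rpow_nonneg ht0.le _)
        -- q sin t - t cos t ≥ 0 via aux_tcot θ t
        have h1 := aux_tcot hθ0 ht.1.le htπ
        -- t cos t sin θ ≤ θ cos θ sin t ≤ q sin θ sin t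
        have hst : 0 < Real.sin t := Real.sin_pos_of_pos_of_lt_pi ht0 htπ
        have h2 : t * Real.cos t * Real.sin θ ≤ q * Real.sin t * Real.sin θ := by
          calc t * Real.cos t * Real.sin θ ≤ θ * Real.cos θ * Real.sin t := h1
          _ ≤ (q * Real.sin θ) * Real.sin t := mul_le_mul_of_nonneg_right hqs hst.le
          _ = q * Real.sin t * Real.sin θ := by ring
        have := le_of_mul_le_mul_right (by linarith : t * Real.cos t * Real.sin θ ≤ (q * Real.sin t) * Real.sin θ) hsθ
        linarith
    exact this (Set.left_mem_Icc.mpr hθy) (Set.right_mem_Icc.mpr hθy) hθy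
  -- value of ρ at θ and the small-x bound
  have hρθ : ρ θ = θ ^ q / Real.sin θ := rfl
  set c : ℝ := (Real.sin θ / θ ^ q) ^ (1 / (1 - q)) with hcdef
  have hcpos : 0 < c := Real.rpow_pos_of_pos (div_pos hsθ hθq) _
  have hcq : c ^ (q - 1) = ρ θ := by
    have hbase : (0:ℝ) ≤ Real.sin θ / θ ^ q := (div_pos hsθ hθq).le
    rw [hcdef, ← Real.rpow_mul hbase]
    have : 1 / (1 - q) * (q - 1) = -1 := by
      rw [div_mul_eq_mul_div, one_mul, div_eq_iff (by linarith : (1:ℝ) - q ≠ 0)]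
      ring
    rw [this, Real.rpow_neg_one, hρθ]
    rw [inv_div]
  have hc : ∀ y, 0 < y → y ≤ c → y ≤ θ → ρ θ ≤ ρ y := by
    intro y hy hyc hyθ
    have hsy : 0 < Real.sin y := Real.sin_pos_of_pos_of_lt_pi hy (lt_of_le_of_lt hyθ hθπ')
    have h1 : y ^ q / y ≤ ρ y := by
      apply div_le_div_of_nonneg_left (Real.rpow_nonneg hy.le q) hsy
      exact Real.sin_le hy.le
    have h2 : y ^ q / y = y ^ (q - 1) := by
      conv_rhs => rw [Real.rpow_sub hy q 1]
      rw [Real.rpow_one]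
    have h3 : c ^ (q - 1) ≤ y ^ (q - 1) :=
      Real.rpow_le_rpow_of_nonpos hy hyc (by linarith)
    rw [← hcq]
    calc c ^ (q - 1) ≤ y ^ (q - 1) := h3
    _ = y ^ q / y := h2.symm
    _ ≤ ρ y := h1
  -- produce the turning point t
  have hmain : ∃ t, 0 ≤ t ∧ t ≤ θ ∧ (∀ y, 0 < y → y < t → ρ θ ≤ ρ y) ∧
      (∀ y, t < y → y < θ → ρ y ≤ ρ θ) := by
    rcases le_or_gt x₁ 0 with hx10 | hx10
    · refine ⟨0, le_rfl, hθ0.le, fun y hy hy0 => absurd (hy.trans hy0) (by simp), ?_⟩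
      intro y hy hyθ
      exact hM2 y (lt_of_le_of_lt hx10 hy) hyθ.le
    · rcases le_or_gt (ρ θ) (ρ x₁) with hA | hA
      · refine ⟨x₁, hx₁0, hx₁θ, ?_, ?_⟩
        · intro y hy hyx
          exact hA.trans (hM1 y x₁ hy hyx.le le_rfl)
        · intro y hyx hyθ
          exact hM2 y hyx hyθ.le
      · set c' : ℝ := min c x₁ with hc'def
        have hc'0 : 0 < c' := lt_min hcpos hx10
        have hc'x : c' ≤ x₁ := min_le_right _ _
        have hρc' : ρ θ ≤ ρ c' := hc c' hc'0 (min_le_left _ _) (hc'x.trans hx₁θ)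
        have hcont : ContinuousOn ρ (Set.Icc c' x₁) := hρcont (fun t ht =>
          ⟨hc'0.trans_le ht.1, by linarith [ht.2.trans hx₁θ]⟩)
        have hIVT := intermediate_value_Icc' hc'x hcont
        have hmem : ρ θ ∈ Set.Icc (ρ x₁) (ρ c') := ⟨hA.le, hρc'⟩
        obtain ⟨t, htmem, htval⟩ := hIVT hmem
        refine ⟨t, (hc'0.trans_le htmem.1).le, htmem.2.trans hx₁θ, ?_, ?_⟩
        · intro y hy hyt
          rcases le_or_gt y c with hyc | hyc
          · exact hc y hy hyc (by linarith [htmem.2.trans hx₁θ])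
          · have : c' ≤ c := min_le_left _ _
            rw [← htval]
            exact hM1 y t hy hyt.le htmem.2
        · intro y hty hyθ
          rcases le_or_gt y x₁ with hyx | hyx
          · rw [← htval]
            exact hM1 t y (hc'0.trans_le htmem.1) hty.le hyx
          · exact hM2 y hyx hyθ.le
  obtain ⟨t, ht0, htθ, hI, hII⟩ := hmain
  -- bridge: sign of F' from ρ comparisons
  have hbridge : ∀ y, 0 < y → y < Real.pi →
      ((ρ θ ≤ ρ y → 0 ≤ p * (Real.sin θ * y ^ q - θ ^ q * Real.sin y)) ∧
       (ρ y ≤ ρ θ → p * (Real.sin θ * y ^ q - θ ^ q * Real.sin y) ≤ 0)) := by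
    intro y hy hyπ
    have hsy : 0 < Real.sin y := Real.sin_pos_of_pos_of_lt_pi hy hyπ
    constructor
    · intro h
      rw [hρθ, div_le_div_iff₀ hsθ hsy] at h
      apply mul_nonneg hp0.le
      linarith
    · intro h
      rw [hρθ, div_le_div_iff₀ hsy hsθ] at h
      apply mul_nonpos_of_nonneg_of_nonpos hp0.le
      linarith
  have hFcont : Continuous F := by
    have h1 : Continuous fun x : ℝ => x ^ p := by
      have : ∀ x : ℝ, HasDerivAt (fun x : ℝ => x ^ p) (p * x ^ (p-1)) x :=
        fun x => Real.hasDerivAt_rpow_const (Or.inr hp1)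
      exact continuous_iff_continuousAt.mpr fun x => (this x).continuousAt
    exact (continuous_const.mul h1).add (continuous_const.mul Real.continuous_cos)
  -- F monotone on [0,t]
  have hF1 : MonotoneOn F (Set.Icc 0 t) := by
    apply monotoneOn_of_deriv_nonneg (convex_Icc 0 t) hFcont.continuousOn
    · intro y _
      exact (hF' y).differentiableAt.differentiableWithinAt
    · intro y hy
      rw [interior_Icc] at hy
      rw [(hF' y).deriv]
      have hyπ : y < Real.pi := by linarith [hy.2.trans_le htθ]
      exact (hbridge y hy.1 hyπ).1 (hI y hy.1 hy.2)
  have hF2 : AntitoneOn F (Set.Icc t θ) := by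
    apply antitoneOn_of_deriv_nonpos (convex_Icc t θ) hFcont.continuousOn
    · intro y _
      exact (hF' y).differentiableAt.differentiableWithinAt
    · intro y hy
      rw [interior_Icc] at hy
      rw [(hF' y).deriv]
      have hy0 : 0 < y := lt_of_le_of_lt ht0 hy.1
      exact (hbridge y hy0 (hy.2.trans hθπ')).2 (hII y hy.1 hy.2)
  have hF3 : MonotoneOn F (Set.Icc θ Real.pi) := by
    apply monotoneOn_of_deriv_nonneg (convex_Icc θ Real.pi) hFcont.continuousOn
    · intro y _
      exact (hF' y).differentiableAt.differentiableWithinAt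
    · intro y hy
      rw [interior_Icc] at hy
      rw [(hF' y).deriv]
      exact (hbridge y (hθ0.trans hy.1) hy.2).1 (hM3 y hy.1.le hy.2)
  -- endpoint values
  have hF0 : F θ ≤ F 0 := by
    have h0p : (0:ℝ) ^ p = 0 := Real.zero_rpow hp0.ne'
    have hθp : θ ^ p = θ ^ q * θ := by
      rw [hqdef, ← Real.rpow_add_one hθ0.ne' (p - 1)]
      congr 1
      ring
    simp only [hFdef, h0p, Real.cos_zero, mul_zero, zero_add, mul_one]
    rw [hθp, hCq]
    rw [hqdef] at *
    have h2 : θ * Real.sin θ + p * Real.cos θ ≤ p := by linarith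
    nlinarith [Real.rpow_nonneg hθ0.le q]
  have hFθπ : F θ ≤ F Real.pi :=
    hF3 (Set.left_mem_Icc.mpr hθπ'.le) (Set.right_mem_Icc.mpr hθπ'.le) hθπ'.le
  -- conclusion
  intro x hx
  show F θ ≤ F x
  rcases le_or_gt x t with h1 | h1
  · have := hF1 (Set.left_mem_Icc.mpr ht0) ⟨hx, h1⟩ hx
    linarith [hF0]
  · rcases le_or_gt x θ with h2 | h2
    · exact hF2 ⟨h1.le, h2⟩ (Set.right_mem_Icc.mpr htθ) h2
    · rcases le_or_gt x Real.pi with h3 | h3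
      · exact hF3 (Set.left_mem_Icc.mpr hθπ'.le) ⟨h2.le, h3⟩ h2.le
      · have h4 : F Real.pi ≤ F x := by
          simp only [hFdef, Real.cos_pi]
          have h5 : Real.pi ^ p ≤ x ^ p := Real.rpow_le_rpow hπ.le h3.le hp0.le
          have h6 : (-1:ℝ) ≤ Real.cos x := Real.neg_one_le_cos x
          nlinarith [hsθ, hC0]
        linarith [hFθπ]

theorem stmt14 (n : ℕ) (a : Fin n → ℂ) (ha : ∑ j, ‖a j‖ ^ 2 = 1)
    (E : Fin n → ℝ) (τ : ℝ) (hτ : 0 ≤ τ) (p φ : ℝ) (hp : p ∈ Set.Ioo (0 : ℝ) 2)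
    (hφ : φ ∈ Set.Ioo (0 : ℝ) Real.pi ∧
      p * (Real.cos φ - 1) + φ * Real.sin φ = 0)
    (hφle : φ ≤ Real.arccos
      ‖∑ j, ((‖a j‖ ^ 2 : ℝ) : ℂ) * Complex.exp (-Complex.I * (E j : ℂ) * (τ : ℂ))‖) :
    ∀ Er : ℝ,
      (Real.arccos
        ‖∑ j, ((‖a j‖ ^ 2 : ℝ) : ℂ) * Complex.exp (-Complex.I * (E j : ℂ) * (τ : ℂ))‖) ^ p ≤
      τ ^ p * ∑ j, ‖a j‖ ^ 2 * |E j - Er| ^ p := by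
  intro Er
  obtain ⟨⟨hφ0, hφπ⟩, hφeq⟩ := hφ
  obtain ⟨hp0, hp2⟩ := hp
  set z : ℂ := ∑ j, ((‖a j‖ ^ 2 : ℝ) : ℂ) * Complex.exp (-Complex.I * (E j : ℂ) * (τ : ℂ))
    with hzdef
  set θ : ℝ := Real.arccos ‖z‖ with hθdef
  have hπ : (0:ℝ) < Real.pi := Real.pi_pos
  have hwnn : ∀ j, (0:ℝ) ≤ ‖a j‖ ^ 2 := fun j => pow_nonneg (norm_nonneg _) 2
  have hε0 : (0:ℝ) ≤ ‖z‖ := norm_nonneg _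
  have hnormterm : ∀ j : Fin n,
      ‖((‖a j‖ ^ 2 : ℝ) : ℂ) * Complex.exp (-Complex.I * (E j : ℂ) * (τ : ℂ))‖ = ‖a j‖ ^ 2 := by
    intro j
    have hexp1 : ‖Complex.exp (-Complex.I * (E j : ℂ) * (τ : ℂ))‖ = 1 := by
      rw [Complex.norm_exp]
      have : (-Complex.I * (E j : ℂ) * (τ : ℂ)).re = 0 := by simp
      rw [this, Real.exp_zero]
    rw [norm_mul, hexp1, mul_one, Complex.norm_real, Real.norm_eq_abs, abs_of_nonneg (hwnn j)]
  have hε1 : ‖z‖ ≤ 1 := by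
    calc ‖z‖ ≤ ∑ j, ‖((‖a j‖ ^ 2 : ℝ) : ℂ) * Complex.exp (-Complex.I * (E j : ℂ) * (τ : ℂ))‖ :=
        norm_sum_le _ _
    _ = ∑ j, ‖a j‖ ^ 2 := Finset.sum_congr rfl fun j _ => hnormterm j
    _ = 1 := ha
  have hθ0 : 0 < θ := hφ0.trans_le hφle
  have hθπ2 : θ ≤ Real.pi / 2 := Real.arccos_le_pi_div_two.mpr hε0
  have hθπ' : θ < Real.pi := by linarith
  have hcosθ : Real.cos θ = ‖z‖ := Real.cos_arccos (by linarith) hε1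
  have hsθ : 0 < Real.sin θ := Real.sin_pos_of_pos_of_lt_pi hθ0 hθπ'
  -- derive hk
  have hk : θ * Real.sin θ ≤ p * (1 - Real.cos θ) := by
    set u : ℝ := φ / 2 with hu
    set v : ℝ := θ / 2 with hv
    have hu0 : 0 < u := by rw [hu]; linarith
    have huv : u ≤ v := by rw [hu, hv]; linarith
    have hvπ : v < Real.pi := by rw [hv]; linarith
    have hsu : 0 < Real.sin u := Real.sin_pos_of_pos_of_lt_pi hu0 (lt_of_le_of_lt huv hvπ)
    have hsv : 0 < Real.sin v := Real.sin_pos_of_pos_of_lt_pi (hu0.trans_le huv) hvπ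
    have e1 : Real.cos φ = 1 - 2 * Real.sin u ^ 2 := by
      have h2 := Real.sin_sq_add_cos_sq u
      rw [show φ = 2 * u by rw [hu]; ring, Real.cos_two_mul]
      linarith
    have e2 : Real.sin φ = 2 * Real.sin u * Real.cos u := by
      rw [show φ = 2 * u by rw [hu]; ring, Real.sin_two_mul]
    rw [e1, e2] at hφeq
    have hps : Real.sin u * (φ * Real.cos u - p * Real.sin u) = 0 := by
      linear_combination hφeq / 2
    have hps2 : φ * Real.cos u = p * Real.sin u := by
      rcases mul_eq_zero.mp hps with h | h
      · exact absurd h hsu.ne'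
      · linarith
    have haux := aux_tcot hu0 huv hvπ
    -- v cos v sin u ≤ u cos u sin v; and u cos u = (p sin u)/2 since φ = 2u
    have hφ2u : φ = 2 * u := by rw [hu]; ring
    have h7 : v * Real.cos v * Real.sin u ≤ (p * Real.sin v / 2) * Real.sin u := by
      calc v * Real.cos v * Real.sin u ≤ u * Real.cos u * Real.sin v := haux
      _ = (p * Real.sin v / 2) * Real.sin u := by
          have : u * Real.cos u = p * Real.sin u / 2 := by
            rw [hφ2u] at hps2; linarith
          rw [this]; ring
    have h6 : v * Real.cos v ≤ p * Real.sin v / 2 := le_of_mul_le_mul_right h7 hsu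
    have e1' : Real.cos θ = 1 - 2 * Real.sin v ^ 2 := by
      have h2 := Real.sin_sq_add_cos_sq v
      rw [show θ = 2 * v by rw [hv]; ring, Real.cos_two_mul]
      linarith
    have e2' : Real.sin θ = 2 * Real.sin v * Real.cos v := by
      rw [show θ = 2 * v by rw [hv]; ring, Real.sin_two_mul]
    rw [e1', e2']
    have hθ2v : θ = 2 * v := by rw [hv]; ring
    rw [hθ2v]
    nlinarith [mul_le_mul_of_nonneg_right h6 hsv.le]
  -- pointwise inequality, weighted sum
  have key := key_pointwise hp2 hθ0 hθπ2 hk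
  set C : ℝ := p * θ ^ (p - 1) with hCdef
  have hC0 : 0 < C := mul_pos hp0 (Real.rpow_pos_of_pos hθ0 _)
  have hterm : ∀ j : Fin n,
      ‖a j‖ ^ 2 * (Real.sin θ * θ ^ p + C * Real.cos θ) ≤
      ‖a j‖ ^ 2 * (Real.sin θ * |(E j - Er) * τ| ^ p + C * Real.cos ((E j - Er) * τ)) := by
    intro j
    apply mul_le_mul_of_nonneg_left _ (hwnn j)
    have := key (|(E j - Er) * τ|) (abs_nonneg _)
    rwa [Real.cos_abs] at this
  have hsum := Finset.sum_le_sum (fun j (_ : j ∈ Finset.univ) => hterm j)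
  rw [← Finset.sum_mul, ha, one_mul] at hsum
  have hsplit : ∑ j, ‖a j‖ ^ 2 *
        (Real.sin θ * |(E j - Er) * τ| ^ p + C * Real.cos ((E j - Er) * τ)) =
      Real.sin θ * ∑ j, ‖a j‖ ^ 2 * |(E j - Er) * τ| ^ p +
        C * ∑ j, ‖a j‖ ^ 2 * Real.cos ((E j - Er) * τ) := by
    rw [Finset.mul_sum, Finset.mul_sum, ← Finset.sum_add_distrib]
    exact Finset.sum_congr rfl fun j _ => by ring
  rw [hsplit] at hsum
  -- the cosine sum is at most ‖z‖ = cos θ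
  have hRe : ∑ j, ‖a j‖ ^ 2 * Real.cos ((E j - Er) * τ) ≤ ‖z‖ := by
    have hexpand : ∑ j, ‖a j‖ ^ 2 * Real.cos ((E j - Er) * τ) =
        (z * Complex.exp (Complex.I * (Er : ℂ) * (τ : ℂ))).re := by
      rw [hzdef, Finset.sum_mul, Complex.re_sum]
      refine Finset.sum_congr rfl fun j _ => ?_
      rw [mul_assoc, ← Complex.exp_add]
      have harg : -Complex.I * (E j : ℂ) * (τ : ℂ) + Complex.I * (Er : ℂ) * (τ : ℂ) =
          (((Er - E j) * τ : ℝ) : ℂ) * Complex.I := by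
        push_cast; ring
      rw [harg]
      have : ((((‖a j‖ ^ 2 : ℝ)) : ℂ) * Complex.exp ((((Er - E j) * τ : ℝ) : ℂ) * Complex.I)).re
          = ‖a j‖ ^ 2 * Real.cos ((Er - E j) * τ) := by
        rw [Complex.mul_re, Complex.ofReal_re, Complex.ofReal_im, zero_mul, sub_zero,
          Complex.exp_ofReal_mul_I_re]
      rw [this, show ((Er - E j) * τ) = -((E j - Er) * τ) by ring, Real.cos_neg]
    rw [hexpand]
    calc (z * Complex.exp (Complex.I * (Er : ℂ) * (τ : ℂ))).re
        ≤ ‖z * Complex.exp (Complex.I * (Er : ℂ) * (τ : ℂ))‖ := by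
          exact Complex.re_le_norm _
    _ = ‖z‖ := by
          rw [norm_mul, Complex.norm_exp]
          have : (Complex.I * (Er : ℂ) * (τ : ℂ)).re = 0 := by simp
          rw [this, Real.exp_zero, mul_one]
  rw [← hcosθ] at hRe
  -- conclude θ^p ≤ S
  have hS : θ ^ p ≤ ∑ j, ‖a j‖ ^ 2 * |(E j - Er) * τ| ^ p := by
    have h1 : Real.sin θ * θ ^ p ≤ Real.sin θ * ∑ j, ‖a j‖ ^ 2 * |(E j - Er) * τ| ^ p := by
      nlinarith [mul_le_mul_of_nonneg_left hRe hC0.le]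
    exact le_of_mul_le_mul_left h1 hsθ
  -- rewrite S
  have hSrw : ∑ j, ‖a j‖ ^ 2 * |(E j - Er) * τ| ^ p =
      τ ^ p * ∑ j, ‖a j‖ ^ 2 * |E j - Er| ^ p := by
    rw [Finset.mul_sum]
    refine Finset.sum_congr rfl fun j _ => ?_
    rw [abs_mul, abs_of_nonneg hτ, Real.mul_rpow (abs_nonneg _) hτ]
    ring
  rw [hSrw] at hS
  exact hS
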